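/- Let k ≥ 2 be an integer and define r_k(s,t) = ∫₀^{min(s,t)} (s−x)^{k−1}(t−x)^{k−1} dx for s,t > 0. Then for all s, t ≥ t₀ > 0, r_k(s,t) ≥ ((1 − e^{−v₀}) t₀ / (2k)) s^{k−1} t^{k−1}, where v₀ ≈ 1.59 is any constant such that (1−v/k)^{k−1} ≥ e^{−v} for 0 ≤ v ≤ v₀ and all k ≥ 2. -/

import Mathlib

theorem r_k_lower_bound
    (k : ℕ) (hk : 2 ≤ k)
    (v₀ : ℝ) (hv₀pos : 0 < v₀)
    (hv₀ : ∀ (k' : ℕ), 2 ≤ k' → ∀ v : ℝ, 0 ≤ v → v ≤ v₀ →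
      Real.exp (-v) ≤ (1 - v / (k' : ℝ)) ^ (k' - 1))
    (t₀ : ℝ) (ht₀ : 0 < t₀) (s t : ℝ) (hs : t₀ ≤ s) (ht : t₀ ≤ t) :
    ((1 - Real.exp (-v₀)) * t₀ / (2 * k)) * s ^ (k - 1) * t ^ (k - 1)
      ≤ ∫ x in (0:ℝ)..(min s t), (s - x) ^ (k - 1) * (t - x) ^ (k - 1) := by
  have hk' : (2:ℝ) ≤ (k:ℝ) := by exact_mod_cast hk
  have hkpos : (0:ℝ) < k := by linarith
  have hs0 : 0 < s := lt_of_lt_of_le ht₀ hs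
  have ht0 : 0 < t := lt_of_lt_of_le ht₀ ht
  -- v₀ < 2
  have h2 : Real.exp (-v₀) ≤ 1 - v₀ / 2 := by
    have := hv₀ 2 le_rfl v₀ hv₀pos.le le_rfl
    simpa using this
  have hv₀lt2 : v₀ < 2 := by
    have h3 : 0 < Real.exp (-v₀) := Real.exp_pos _
    linarith
  set a : ℝ := v₀ * t₀ / k with ha_def
  have ha_pos : 0 < a := by positivity
  have ha_lt : a < t₀ := by
    rw [ha_def, div_lt_iff₀ hkpos]
    nlinarith
  have hm : t₀ ≤ min s t := le_min hs ht
  have ham : a ≤ min s t := le_trans ha_lt.le hm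
  set c : ℝ := 2 * k / t₀ with hc_def
  have hc_pos : 0 < c := by positivity
  have hca : c * a = 2 * v₀ := by
    rw [hc_def, ha_def]; field_simp
  set f : ℝ → ℝ := fun x => (s - x) ^ (k - 1) * (t - x) ^ (k - 1) with hf_def
  set g : ℝ → ℝ := fun x => s ^ (k - 1) * t ^ (k - 1) * Real.exp (-(c * x)) with hg_def
  have hfc : Continuous f := by fun_prop
  have hgc : Continuous g := by fun_prop
  -- pointwise bound on [0,a]
  have hpt : ∀ x ∈ Set.Icc (0:ℝ) a, g x ≤ f x := by
    intro x hx
    obtain ⟨hx0, hxa⟩ := hx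
    have key : ∀ u : ℝ, t₀ ≤ u →
        u ^ (k - 1) * Real.exp (-(k * x / t₀)) ≤ (u - x) ^ (k - 1) := by
      intro u hu
      have hu0 : 0 < u := lt_of_lt_of_le ht₀ hu
      have hv : k * x / u ≤ v₀ := by
        rw [div_le_iff₀ hu0]
        have h1 : k * x ≤ k * a := by nlinarith
        have h2 : k * a = v₀ * t₀ := by rw [ha_def]; field_simp
        nlinarith
      have hvnn : 0 ≤ k * x / u := by positivity
      have hb := hv₀ k hk (k * x / u) hvnn hv
      have heq : 1 - (k * x / u) / k = 1 - x / u := by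
        field_simp
      rw [heq] at hb
      have hmono : Real.exp (-(k * x / t₀)) ≤ Real.exp (-(k * x / u)) := by
        apply Real.exp_le_exp.2
        have : k * x / u ≤ k * x / t₀ := by
          apply div_le_div_of_nonneg_left (by positivity) ht₀ hu
        linarith
      calc u ^ (k - 1) * Real.exp (-(k * x / t₀))
          ≤ u ^ (k - 1) * Real.exp (-(k * x / u)) := by
            exact mul_le_mul_of_nonneg_left hmono (by positivity)
        _ ≤ u ^ (k - 1) * (1 - x / u) ^ (k - 1) := by
            exact mul_le_mul_of_nonneg_left hb (by positivity)
        _ = (u * (1 - x / u)) ^ (k - 1) := by rw [mul_pow]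
        _ = (u - x) ^ (k - 1) := by
            congr 1; field_simp
    have hks := key s hs
    have hkt := key t ht
    have htx : 0 ≤ t ^ (k - 1) * Real.exp (-(k * x / t₀)) := by positivity
    have hxs : x < s := lt_of_le_of_lt hxa (lt_of_lt_of_le ha_lt hs)
    have hprod : (s ^ (k - 1) * Real.exp (-(k * x / t₀))) *
        (t ^ (k - 1) * Real.exp (-(k * x / t₀))) ≤
        (s - x) ^ (k - 1) * (t - x) ^ (k - 1) :=
      mul_le_mul hks hkt htx (pow_nonneg (by linarith) _)
    have hexp : Real.exp (-(c * x)) =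
        Real.exp (-(k * x / t₀)) * Real.exp (-(k * x / t₀)) := by
      rw [← Real.exp_add]
      congr 1
      rw [hc_def]
      field_simp
      ring
    show s ^ (k - 1) * t ^ (k - 1) * Real.exp (-(c * x)) ≤
        (s - x) ^ (k - 1) * (t - x) ^ (k - 1)
    rw [hexp]
    calc s ^ (k - 1) * t ^ (k - 1) *
          (Real.exp (-(k * x / t₀)) * Real.exp (-(k * x / t₀)))
        = (s ^ (k - 1) * Real.exp (-(k * x / t₀))) *
          (t ^ (k - 1) * Real.exp (-(k * x / t₀))) := by ring
      _ ≤ _ := hprod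
  -- split integral
  have hint1 : IntervalIntegrable f MeasureTheory.volume 0 a := hfc.intervalIntegrable _ _
  have hint2 : IntervalIntegrable f MeasureTheory.volume a (min s t) := hfc.intervalIntegrable _ _
  have hsplit : ∫ x in (0:ℝ)..(min s t), f x =
      (∫ x in (0:ℝ)..a, f x) + ∫ x in a..(min s t), f x :=
    (intervalIntegral.integral_add_adjacent_intervals hint1 hint2).symm
  have htail : 0 ≤ ∫ x in a..(min s t), f x := by
    apply intervalIntegral.integral_nonneg ham
    intro x hx
    obtain ⟨hx1, hx2⟩ := hx
    have hxs : x ≤ s := le_trans hx2 (min_le_left s t)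
    have hxt : x ≤ t := le_trans hx2 (min_le_right s t)
    exact mul_nonneg (pow_nonneg (by linarith) _) (pow_nonneg (by linarith) _)
  have hstep2 : (∫ x in (0:ℝ)..a, g x) ≤ ∫ x in (0:ℝ)..a, f x := by
    apply intervalIntegral.integral_mono_on ha_pos.le
      (hgc.intervalIntegrable _ _) hint1 hpt
  -- compute ∫ g
  have hderiv : ∀ x ∈ Set.uIcc (0:ℝ) a,
      HasDerivAt (fun y => -(Real.exp (-(c * y))) / c) (Real.exp (-(c * x))) x := by
    intro x _
    have h1 : HasDerivAt (fun y : ℝ => -(c * y)) (-c) x := by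
      simpa using ((hasDerivAt_id x).const_mul (-c))
    have h2 := (Real.hasDerivAt_exp (-(c * x))).comp x h1
    have h3 := h2.div_const c
    have h4 := h3.neg
    convert h4 using 1
    · rfl
    · rfl
    · funext y
      simp [Function.comp, neg_div]
    · rw [mul_neg, neg_div, neg_neg, mul_div_assoc, div_self hc_pos.ne', mul_one]
  have hcompute : (∫ x in (0:ℝ)..a, Real.exp (-(c * x))) =
      (1 - Real.exp (-(c * a))) / c := by
    rw [intervalIntegral.integral_eq_sub_of_hasDerivAt hderiv
      ((by fun_prop : Continuous fun x : ℝ => Real.exp (-(c * x))).intervalIntegrable _ _)]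
    simp
    field_simp
    ring
  have hgval : (∫ x in (0:ℝ)..a, g x) =
      s ^ (k - 1) * t ^ (k - 1) * ((1 - Real.exp (-(2 * v₀))) / c) := by
    rw [hg_def]
    simp only
    rw [intervalIntegral.integral_const_mul, hcompute, hca]
  -- final comparison
  have hfinal : ((1 - Real.exp (-v₀)) * t₀ / (2 * k)) * s ^ (k - 1) * t ^ (k - 1)
      ≤ ∫ x in (0:ℝ)..a, g x := by
    rw [hgval]
    have he : Real.exp (-(2 * v₀)) ≤ Real.exp (-v₀) := by
      apply Real.exp_le_exp.2; linarith
    have hc_eq : (1 - Real.exp (-(2 * v₀))) / c =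
        (1 - Real.exp (-(2 * v₀))) * t₀ / (2 * k) := by
      rw [hc_def]; field_simp
    rw [hc_eq]
    have hsp : 0 ≤ s ^ (k - 1) := by positivity
    have htp : 0 ≤ t ^ (k - 1) := by positivity
    have : (1 - Real.exp (-v₀)) * t₀ / (2 * k) ≤
        (1 - Real.exp (-(2 * v₀))) * t₀ / (2 * k) := by
      apply div_le_div_of_nonneg_right _ (by positivity)
      nlinarith
    calc ((1 - Real.exp (-v₀)) * t₀ / (2 * k)) * s ^ (k - 1) * t ^ (k - 1)
        ≤ ((1 - Real.exp (-(2 * v₀))) * t₀ / (2 * k)) * s ^ (k - 1) * t ^ (k - 1) := by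
          exact mul_le_mul_of_nonneg_right (mul_le_mul_of_nonneg_right this hsp) htp
      _ = s ^ (k - 1) * t ^ (k - 1) * ((1 - Real.exp (-(2 * v₀))) * t₀ / (2 * k)) := by
          ring
  calc ((1 - Real.exp (-v₀)) * t₀ / (2 * k)) * s ^ (k - 1) * t ^ (k - 1)
      ≤ ∫ x in (0:ℝ)..a, g x := hfinal
    _ ≤ ∫ x in (0:ℝ)..a, f x := hstep2
    _ ≤ (∫ x in (0:ℝ)..a, f x) + ∫ x in a..(min s t), f x := le_add_of_nonneg_right htail
    _ = ∫ x in (0:ℝ)..(min s t), f x := hsplit.symm
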